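/- Let E be a metric space, ν ≥ β > 0, p ≥ 1 with ν - p(ν-β) > 0, and γ ∈ ]0, ν - p(ν-β)[. Suppose ν > β and let f : E → [0,∞] be measurable with sup_{x∈E} ∫_{B_1(x)} f(y) / d(x,y)^{ν-γ} d𝔪(y) < ∞ for a Borel measure 𝔪. Then lim_{r→0} sup_{x∈E} ∫_{B_r(x)} f(y) / d(x,y)^{p(ν-β)} d𝔪(y) = 0. -/

import Mathlib

open MeasureTheory Metric Set Filter

theorem stmt4 {E : Type*} [MetricSpace E] [MeasurableSpace E] [BorelSpace E]
    (m : Measure E) (ν β p γ : ℝ) (hβ : 0 < β) (hνβ : β < ν) (hp : 1 ≤ p)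
    (hpνβ : 0 < ν - p * (ν - β)) (hγ0 : 0 < γ) (hγ : γ < ν - p * (ν - β))
    (f : E → ENNReal) (hf : Measurable f)
    (hM : (⨆ x : E, ∫⁻ y in ball x 1,
      f y * ENNReal.ofReal ((dist x y) ^ (-(ν - γ))) ∂m) < ⊤) :
    Tendsto
      (fun r : ℝ => ⨆ x : E, ∫⁻ y in ball x r,
        f y * ENNReal.ofReal ((dist x y) ^ (-(p * (ν - β)))) ∂m)
      (nhdsWithin 0 (Set.Ioi 0)) (nhds 0) := by
  set ε := ν - γ - p * (ν - β) with hεdef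
  have hε0 : 0 < ε := by simp only [hεdef]; linarith
  have hpνβ0 : 0 < p * (ν - β) := mul_pos (by linarith) (by linarith)
  set M := ⨆ x : E, ∫⁻ y in ball x 1,
      f y * ENNReal.ofReal ((dist x y) ^ (-(ν - γ))) ∂m with hMdef
  have key : ∀ r : ℝ, 0 < r → r ≤ 1 →
      (⨆ x : E, ∫⁻ y in ball x r,
        f y * ENNReal.ofReal ((dist x y) ^ (-(p * (ν - β)))) ∂m)
        ≤ ENNReal.ofReal (r ^ ε) * M := by
    intro r hr hr1
    refine iSup_le fun x => ?_
    calc ∫⁻ y in ball x r, f y * ENNReal.ofReal ((dist x y) ^ (-(p * (ν - β)))) ∂m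
        ≤ ∫⁻ y in ball x r,
            ENNReal.ofReal (r ^ ε) * (f y * ENNReal.ofReal ((dist x y) ^ (-(ν - γ)))) ∂m := by
          refine setLIntegral_mono' measurableSet_ball fun y hy => ?_
          rw [mul_left_comm]
          refine mul_le_mul_right ?_ _
          rw [← ENNReal.ofReal_mul (Real.rpow_nonneg hr.le _)]
          refine ENNReal.ofReal_le_ofReal ?_
          rcases eq_or_lt_of_le (dist_nonneg (x := x) (y := y)) with hd | hd
          · rw [← hd, Real.zero_rpow (neg_ne_zero.mpr hpνβ0.ne')]
            positivity
          · have hdr : dist x y < r := by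
              rw [mem_ball, dist_comm] at hy; exact hy
            have : (dist x y) ^ (-(p * (ν - β)))
                = (dist x y) ^ ε * (dist x y) ^ (-(ν - γ)) := by
              rw [← Real.rpow_add hd, hεdef]; ring_nf
            rw [this]
            have hle : (dist x y) ^ ε ≤ r ^ ε :=
              Real.rpow_le_rpow hd.le hdr.le hε0.le
            exact mul_le_mul_of_nonneg_right hle (Real.rpow_nonneg hd.le _)
      _ = ENNReal.ofReal (r ^ ε) *
            ∫⁻ y in ball x r, f y * ENNReal.ofReal ((dist x y) ^ (-(ν - γ))) ∂m :=
          lintegral_const_mul' _ _ ENNReal.ofReal_ne_top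
      _ ≤ ENNReal.ofReal (r ^ ε) *
            ∫⁻ y in ball x 1, f y * ENNReal.ofReal ((dist x y) ^ (-(ν - γ))) ∂m :=
          mul_le_mul_right (lintegral_mono_set (ball_subset_ball hr1)) _
      _ ≤ ENNReal.ofReal (r ^ ε) * M := mul_le_mul_right (le_iSup (fun x : E => ∫⁻ y in ball x 1, f y * ENNReal.ofReal ((dist x y) ^ (-(ν - γ))) ∂m) x) _
  have hbound : Tendsto (fun r : ℝ => ENNReal.ofReal (r ^ ε) * M)
      (nhdsWithin 0 (Set.Ioi 0)) (nhds 0) := by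
    have h1 : Tendsto (fun r : ℝ => r ^ ε) (nhdsWithin 0 (Set.Ioi 0)) (nhds 0) := by
      have := (Real.continuousAt_rpow_const 0 ε (Or.inr hε0.le)).tendsto
      rw [Real.zero_rpow hε0.ne'] at this
      exact this.mono_left nhdsWithin_le_nhds
    have h2 : Tendsto (fun r : ℝ => ENNReal.ofReal (r ^ ε))
        (nhdsWithin 0 (Set.Ioi 0)) (nhds 0) := by
      simpa [Function.comp_def] using (ENNReal.continuous_ofReal.tendsto 0).comp h1
    simpa using ENNReal.Tendsto.mul_const h2 (Or.inr hM.ne)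
  refine tendsto_of_tendsto_of_tendsto_of_le_of_le' tendsto_const_nhds hbound
    (Eventually.of_forall fun r => zero_le) ?_
  filter_upwards [Ioc_mem_nhdsGT (by norm_num : (0:ℝ) < 1)] with r hr
  exact key r hr.1 hr.2
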